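/- Let R = {[[f(x), g(x)],[0, f(x²)]] : f, g ∈ k[x]}, C the diagonal subring ≅ k[x], D₂ = Hom_C(R_C, C) viewed as a right R-module, and e₁₂ the strictly upper triangular matrix unit. Then D₂ ≅ R/e₁₂R as right R-modules, and End_R(D₂) ≅ I(e₁₂R)/e₁₂R where I(e₁₂R) = {θ ∈ R : θ·e₁₂·R ⊆ e₁₂·R} is the idealizer; moreover this endomorphism ring is isomorphic to R itself. -/

import Mathlib

set_option maxHeartbeats 1000000
set_option synthInstance.maxHeartbeats 400000

open Polynomial MulOpposite

noncomputable section

variable (k : Type*) [Field k]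

/-- The set underlying the ring `R = {[[f(x), g(x)], [0, f(x²)]] : f, g ∈ k[x]}`. -/
def Rset : Set (Matrix (Fin 2) (Fin 2) (Polynomial k)) :=
  {M | ∃ f g : Polynomial k, M = !![f, g; 0, f.comp (Polynomial.X ^ 2)]}

/-- The ring `R`, as a subring of `M₂(k[x])`. -/
def Rsub : Subring (Matrix (Fin 2) (Fin 2) (Polynomial k)) :=
  Subring.closure (Rset k)

/-- The diagonal matrix `c f = diag(f(x), f(x²))`, an element of `C ⊆ R`. -/
def cEl (f : Polynomial k) : Rsub k :=
  ⟨!![f, 0; 0, f.comp (Polynomial.X ^ 2)], Subring.subset_closure ⟨f, 0, rfl⟩⟩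

lemma cEl_one : cEl k 1 = 1 := by
  apply Subtype.ext
  show !![(1 : Polynomial k), 0; 0, (1 : Polynomial k).comp (Polynomial.X ^ 2)] = 1
  rw [Matrix.one_fin_two, Polynomial.one_comp]

lemma cEl_add (f g : Polynomial k) : cEl k (f + g) = cEl k f + cEl k g := by
  apply Subtype.ext
  show !![f + g, 0; 0, (f + g).comp (Polynomial.X ^ 2)] =
    !![f, 0; 0, f.comp (Polynomial.X ^ 2)] + !![g, 0; 0, g.comp (Polynomial.X ^ 2)]
  ext i j
  fin_cases i <;> fin_cases j <;>
    simp [Polynomial.add_comp]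

lemma cEl_mul (f g : Polynomial k) : cEl k (f * g) = cEl k f * cEl k g := by
  apply Subtype.ext
  show !![f * g, 0; 0, (f * g).comp (Polynomial.X ^ 2)] =
    !![f, 0; 0, f.comp (Polynomial.X ^ 2)] * !![g, 0; 0, g.comp (Polynomial.X ^ 2)]
  rw [Matrix.mul_fin_two]
  ext i j
  fin_cases i <;> fin_cases j <;>
    simp [Polynomial.mul_comp]

/-- The ring homomorphism `k[x] → Rᵐᵒᵖ`, `f ↦ c f`, giving the right `C ≅ k[x]`-module
structure of `R`. -/
lemma cEl_zero : cEl k 0 = 0 := by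
  apply Subtype.ext
  show !![(0 : Polynomial k), 0; 0, (0 : Polynomial k).comp (Polynomial.X ^ 2)] = 0
  ext i j
  fin_cases i <;> fin_cases j <;> simp

def cHom : Polynomial k →+* (Rsub k)ᵐᵒᵖ where
  toFun f := op (cEl k f)
  map_one' := by
    show op (cEl k 1) = 1
    rw [cEl_one]; rfl
  map_mul' f g := by
    show op (cEl k (f * g)) = op (cEl k f) * op (cEl k g)
    rw [mul_comm f g, cEl_mul]; rfl
  map_zero' := by
    show op (cEl k 0) = 0
    rw [cEl_zero]; rfl
  map_add' f g := by
    show op (cEl k (f + g)) = op (cEl k f) + op (cEl k g)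
    rw [cEl_add]; rfl

/-- `R` as a right `C ≅ k[x]`-module: `f • r = r * c f`. -/
instance rightCModule : Module (Polynomial k) (Rsub k) :=
  Module.compHom _ (cHom k)

/-- `D₂ = Hom_C(R_C, C)`, the `C ≅ k[x]`-linear dual of `R` with respect to its right
`C`-module structure. -/
abbrev D₂ := (Rsub k) →ₗ[Polynomial k] (Polynomial k)

/-- Left multiplication by `r ∈ R` on `R`, as a `C`-linear endomorphism. -/
def lmulLeft (r : Rsub k) : (Rsub k) →ₗ[Polynomial k] (Rsub k) where
  toFun s := r * s
  map_add' s s' := mul_add r s s'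
  map_smul' f s := (mul_assoc r s (cEl k f)).symm

/-- The right `R`-module structure of `D₂`: `(φ·r)(s) = φ(r·s)`. -/
instance rightRModuleD₂ : Module (Rsub k)ᵐᵒᵖ (D₂ k) where
  smul m φ := LinearMap.comp φ (lmulLeft k m.unop)
  one_smul φ := by
    apply LinearMap.ext; intro s
    show φ ((1 : (Rsub k)ᵐᵒᵖ).unop * s) = φ s
    rw [unop_one, one_mul]
  mul_smul m m' φ := by
    apply LinearMap.ext; intro s
    show φ ((m * m').unop * s) = φ (m'.unop * (m.unop * s))
    rw [unop_mul, mul_assoc]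
  smul_zero m := rfl
  smul_add m φ ψ := rfl
  add_smul m m' φ := by
    apply LinearMap.ext; intro s
    show φ ((m + m').unop * s) = φ (m.unop * s) + φ (m'.unop * s)
    rw [unop_add, add_mul, map_add]
  zero_smul φ := by
    apply LinearMap.ext; intro s
    show φ ((0 : (Rsub k)ᵐᵒᵖ).unop * s) = (0 : Polynomial k)
    rw [unop_zero, zero_mul, map_zero]

/-- The matrix unit `e₁₂` as an element of `R`. -/
def e₁₂el : Rsub k :=
  ⟨!![0, 1; 0, 0], Subring.subset_closure ⟨0, 1, by
    ext i j
    fin_cases i <;> fin_cases j <;> simp⟩⟩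

/-- The right ideal `e₁₂R`, as a right `R`-submodule of `R`. -/
def e₁₂R : Submodule (Rsub k)ᵐᵒᵖ (Rsub k) :=
  Submodule.span (Rsub k)ᵐᵒᵖ {e₁₂el k}


/-! ### Auxiliary development -/

/-- The set `Rset` is itself a subring. -/
def RsubExplicit : Subring (Matrix (Fin 2) (Fin 2) (Polynomial k)) where
  carrier := Rset k
  one_mem' := ⟨1, 0, by rw [Matrix.one_fin_two, Polynomial.one_comp]⟩
  zero_mem' := ⟨0, 0, by
    ext i j; fin_cases i <;> fin_cases j <;> simp⟩
  add_mem' := by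
    rintro _ _ ⟨f, g, rfl⟩ ⟨f', g', rfl⟩
    exact ⟨f + f', g + g', by ext i j; fin_cases i <;> fin_cases j <;>
      simp [Polynomial.add_comp]⟩
  neg_mem' := by
    rintro _ ⟨f, g, rfl⟩
    exact ⟨-f, -g, by ext i j; fin_cases i <;> fin_cases j <;>
      simp [Polynomial.neg_comp]⟩
  mul_mem' := by
    rintro _ _ ⟨f, g, rfl⟩ ⟨f', g', rfl⟩
    refine ⟨f * f', f * g' + g * (f'.comp (Polynomial.X ^ 2)), ?_⟩
    rw [Matrix.mul_fin_two]
    ext i j; fin_cases i <;> fin_cases j <;>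
      simp [Polynomial.mul_comp]

lemma Rsub_eq_explicit : Rsub k = RsubExplicit k := by
  refine le_antisymm ?_ ?_
  · rw [Rsub, Subring.closure_le]; exact fun x hx => hx
  · exact fun x hx => Subring.subset_closure hx

lemma Rsub_coe_eq : ((Rsub k : Set (Matrix (Fin 2) (Fin 2) (Polynomial k))) = Rset k) := by
  rw [Rsub_eq_explicit]; rfl

/-- The generic element `[[f, g], [0, f(x²)]]` of `R`. -/
def mk (f g : Polynomial k) : Rsub k :=
  ⟨!![f, g; 0, f.comp (Polynomial.X ^ 2)], Subring.subset_closure ⟨f, g, rfl⟩⟩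

lemma exists_mk (r : Rsub k) : ∃ f g : Polynomial k, r = mk k f g := by
  have h : (r : Matrix (Fin 2) (Fin 2) (Polynomial k)) ∈ RsubExplicit k := by
    rw [← Rsub_eq_explicit]; exact r.2
  obtain ⟨f, g, hfg⟩ := h
  exact ⟨f, g, Subtype.ext hfg⟩

lemma mk_inj {f g f' g' : Polynomial k} (h : mk k f g = mk k f' g') : f = f' ∧ g = g' := by
  have h0 := congrArg (fun r : Rsub k => (r : Matrix (Fin 2) (Fin 2) (Polynomial k)) 0 0) h
  have h1 := congrArg (fun r : Rsub k => (r : Matrix (Fin 2) (Fin 2) (Polynomial k)) 0 1) h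
  simp [mk] at h0 h1
  exact ⟨h0, h1⟩

lemma mk_add (f g f' g' : Polynomial k) :
    mk k f g + mk k f' g' = mk k (f + f') (g + g') := by
  apply Subtype.ext
  show (!![f, g; 0, f.comp (Polynomial.X ^ 2)] + !![f', g'; 0, f'.comp (Polynomial.X ^ 2)] :
    Matrix (Fin 2) (Fin 2) (Polynomial k)) = _
  ext i j; fin_cases i <;> fin_cases j <;> simp [mk, Polynomial.add_comp]

lemma mk_mul (f g f' g' : Polynomial k) :
    mk k f g * mk k f' g' = mk k (f * f') (f * g' + g * (f'.comp (Polynomial.X ^ 2))) := by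
  apply Subtype.ext
  show (!![f, g; 0, f.comp (Polynomial.X ^ 2)] * !![f', g'; 0, f'.comp (Polynomial.X ^ 2)] :
    Matrix (Fin 2) (Fin 2) (Polynomial k)) = _
  rw [Matrix.mul_fin_two]
  ext i j; fin_cases i <;> fin_cases j <;> simp [mk, Polynomial.mul_comp]

lemma mk_zero : mk k 0 0 = 0 := by
  apply Subtype.ext
  show !![(0 : Polynomial k), 0; 0, (0 : Polynomial k).comp (Polynomial.X ^ 2)] = 0
  ext i j; fin_cases i <;> fin_cases j <;> simp

lemma mk_one : mk k 1 0 = 1 := by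
  apply Subtype.ext
  show !![(1 : Polynomial k), 0; 0, (1 : Polynomial k).comp (Polynomial.X ^ 2)] = 1
  rw [Matrix.one_fin_two, Polynomial.one_comp]

lemma e₁₂el_eq : e₁₂el k = mk k 0 1 := by
  apply Subtype.ext
  show !![(0 : Polynomial k), 1; 0, 0] = !![0, 1; 0, (0 : Polynomial k).comp (Polynomial.X ^ 2)]
  ext i j; fin_cases i <;> fin_cases j <;> simp

lemma cEl_eq_mk (f : Polynomial k) : cEl k f = mk k f 0 := rfl

lemma smul_mk (f : Polynomial k) (r : Rsub k) : f • r = r * cEl k f := rfl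

/-- The even part: `evenPart g` has `coeff n = g.coeff (2n)`. -/
def evenPart (g : Polynomial k) : Polynomial k :=
  Polynomial.ofFinsupp (AddMonoidAlgebra.ofCoeff <| Finsupp.comapDomain (fun n => 2 * n) g.toFinsupp.coeff
    (fun a _ b _ h => by simp only at h; omega))

/-- The odd part: `oddPart g` has `coeff n = g.coeff (2n+1)`. -/
def oddPart (g : Polynomial k) : Polynomial k :=
  Polynomial.ofFinsupp (AddMonoidAlgebra.ofCoeff <| Finsupp.comapDomain (fun n => 2 * n + 1) g.toFinsupp.coeff
    (fun a _ b _ h => by simp only at h; omega))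

lemma coeff_evenPart (g : Polynomial k) (n : ℕ) : (evenPart k g).coeff n = g.coeff (2 * n) := rfl

lemma coeff_oddPart (g : Polynomial k) (n : ℕ) : (oddPart k g).coeff n = g.coeff (2 * n + 1) := rfl

lemma coeff_comb_even (a b : Polynomial k) (m : ℕ) :
    (Polynomial.expand k 2 a + Polynomial.X * Polynomial.expand k 2 b).coeff (2 * m)
      = a.coeff m := by
  rw [Polynomial.coeff_add, Polynomial.coeff_expand two_pos, if_pos (dvd_mul_right 2 m),
    Nat.mul_div_cancel_left m two_pos]
  rcases Nat.eq_zero_or_pos m with rfl | hm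
  · simp
  · rw [show 2 * m = (2 * m - 1) + 1 by omega, Polynomial.coeff_X_mul,
      Polynomial.coeff_expand two_pos, if_neg (by omega), add_zero]

lemma coeff_comb_odd (a b : Polynomial k) (m : ℕ) :
    (Polynomial.expand k 2 a + Polynomial.X * Polynomial.expand k 2 b).coeff (2 * m + 1)
      = b.coeff m := by
  rw [Polynomial.coeff_add, Polynomial.coeff_expand two_pos, if_neg (by omega),
    Polynomial.coeff_X_mul, Polynomial.coeff_expand two_pos, if_pos (dvd_mul_right 2 m),
    Nat.mul_div_cancel_left m two_pos, zero_add]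

lemma parts_unique {a b g : Polynomial k}
    (h : g = Polynomial.expand k 2 a + Polynomial.X * Polynomial.expand k 2 b) :
    evenPart k g = a ∧ oddPart k g = b := by
  subst h
  exact ⟨Polynomial.ext fun n => (coeff_evenPart k _ n).trans (coeff_comb_even k a b n),
    Polynomial.ext fun n => (coeff_oddPart k _ n).trans (coeff_comb_odd k a b n)⟩

lemma parts_decomp (g : Polynomial k) :
    Polynomial.expand k 2 (evenPart k g) + Polynomial.X * Polynomial.expand k 2 (oddPart k g)
      = g := by
  ext n
  rcases Nat.even_or_odd n with ⟨m, hm⟩ | ⟨m, hm⟩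
  · rw [show n = 2 * m by omega, coeff_comb_even, coeff_evenPart]
  · rw [show n = 2 * m + 1 by omega, coeff_comb_odd, coeff_oddPart]

lemma evenPart_expand (a : Polynomial k) : evenPart k (Polynomial.expand k 2 a) = a :=
  (parts_unique k (a := a) (b := 0) (by simp)).1

lemma oddPart_expand (a : Polynomial k) : oddPart k (Polynomial.expand k 2 a) = 0 :=
  (parts_unique k (a := a) (b := 0) (by simp)).2

lemma evenPart_X_mul_expand (a : Polynomial k) :
    evenPart k (Polynomial.X * Polynomial.expand k 2 a) = 0 :=
  (parts_unique k (a := 0) (b := a) (by simp)).1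

lemma oddPart_X_mul_expand (a : Polynomial k) :
    oddPart k (Polynomial.X * Polynomial.expand k 2 a) = a :=
  (parts_unique k (a := 0) (b := a) (by simp)).2

lemma evenPart_expand_mul (u g : Polynomial k) :
    evenPart k (Polynomial.expand k 2 u * g) = u * evenPart k g :=
  (parts_unique k (a := u * evenPart k g) (b := u * oddPart k g) (by
    conv_lhs => rw [← parts_decomp k g]
    rw [map_mul, map_mul]
    ring)).1

lemma oddPart_expand_mul (u g : Polynomial k) :
    oddPart k (Polynomial.expand k 2 u * g) = u * oddPart k g :=
  (parts_unique k (a := u * evenPart k g) (b := u * oddPart k g) (by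
    conv_lhs => rw [← parts_decomp k g]
    rw [map_mul, map_mul]
    ring)).2

lemma evenPart_X_mul (f : Polynomial k) :
    evenPart k (Polynomial.X * f) = Polynomial.X * oddPart k f :=
  (parts_unique k (a := Polynomial.X * oddPart k f) (b := evenPart k f) (by
    conv_lhs => rw [← parts_decomp k f]
    rw [map_mul, Polynomial.expand_X]
    ring)).1

lemma oddPart_X_mul (f : Polynomial k) :
    oddPart k (Polynomial.X * f) = evenPart k f :=
  (parts_unique k (a := Polynomial.X * oddPart k f) (b := evenPart k f) (by
    conv_lhs => rw [← parts_decomp k f]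
    rw [map_mul, Polynomial.expand_X]
    ring)).2

lemma evenPart_add (f g : Polynomial k) :
    evenPart k (f + g) = evenPart k f + evenPart k g := by
  ext n; simp [coeff_evenPart]

lemma oddPart_add (f g : Polynomial k) :
    oddPart k (f + g) = oddPart k f + oddPart k g := by
  ext n; simp [coeff_oddPart]

lemma evenPart_zero : evenPart k 0 = 0 := by ext n; simp [coeff_evenPart]

lemma oddPart_zero : oddPart k 0 = 0 := by ext n; simp [coeff_oddPart]

lemma oddPart_one : oddPart k 1 = 0 :=
  (parts_unique k (a := 1) (b := 0) (g := 1) (by simp)).2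

lemma evenPart_one : evenPart k 1 = 1 :=
  (parts_unique k (a := 1) (b := 0) (g := 1) (by simp)).1

lemma oddPart_X : oddPart k Polynomial.X = 1 := by
  have := oddPart_X_mul_expand k 1
  simpa using this

lemma eq_expand_of_oddPart_eq_zero {g : Polynomial k} (h : oddPart k g = 0) :
    g = Polynomial.expand k 2 (evenPart k g) := by
  conv_lhs => rw [← parts_decomp k g]
  rw [h]
  simp

lemma eq_zero_of_parts {f : Polynomial k} (he : evenPart k f = 0) (ho : oddPart k f = 0) :
    f = 0 := by
  rw [← parts_decomp k f, he, ho]; simp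

lemma mk_mul' (f g f' g' : Polynomial k) :
    mk k f g * mk k f' g' = mk k (f * f') (f * g' + g * Polynomial.expand k 2 f') := by
  rw [Polynomial.expand_eq_comp_X_pow]; exact mk_mul k f g f' g'

lemma val_mk_01 (f g : Polynomial k) :
    ((mk k f g : Rsub k) : Matrix (Fin 2) (Fin 2) (Polynomial k)) 0 1 = g := by
  simp [mk]

/-- The dual-basis functional `φ₂ ∈ D₂`: `φ₂ [[f,g],[0,f(x²)]] = (odd part of g)`. -/
def φ₂ : D₂ k where
  toFun s := oddPart k ((s : Matrix (Fin 2) (Fin 2) (Polynomial k)) 0 1)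
  map_add' s s' := by
    show oddPart k ((s : Matrix (Fin 2) (Fin 2) (Polynomial k)) 0 1
      + (s' : Matrix (Fin 2) (Fin 2) (Polynomial k)) 0 1) = _
    rw [oddPart_add]
  map_smul' f s := by
    obtain ⟨fs, gs, rfl⟩ := exists_mk k s
    show oddPart k (((mk k fs gs * cEl k f : Rsub k) :
      Matrix (Fin 2) (Fin 2) (Polynomial k)) 0 1)
      = (RingHom.id (Polynomial k)) f • oddPart k (((mk k fs gs : Rsub k) :
        Matrix (Fin 2) (Fin 2) (Polynomial k)) 0 1)
    rw [cEl_eq_mk, mk_mul', val_mk_01, val_mk_01]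
    simp only [mul_zero, zero_add, RingHom.id_apply, smul_eq_mul]
    rw [mul_comm gs, oddPart_expand_mul]

lemma φ₂_mk (f g : Polynomial k) : φ₂ k (mk k f g) = oddPart k g := by
  show oddPart k (((mk k f g : Rsub k) : Matrix (Fin 2) (Fin 2) (Polynomial k)) 0 1) = _
  rw [val_mk_01]

/-- Decomposition of a generic element of `R` in terms of the `C`-basis `1, e₁₂, e₁₂·x`. -/
lemma decompR (f g : Polynomial k) :
    mk k f g = f • (1 : Rsub k) + evenPart k g • e₁₂el k
      + oddPart k g • (mk k 0 Polynomial.X) := by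
  rw [smul_mk, smul_mk, smul_mk, one_mul, cEl_eq_mk, cEl_eq_mk, cEl_eq_mk, e₁₂el_eq,
    mk_mul', mk_mul', mk_add, mk_add]
  simp only [mul_zero, zero_mul, mul_one, one_mul, zero_add, add_zero]
  rw [parts_decomp]

lemma D₂_ext {φ ψ : D₂ k} (h1 : φ 1 = ψ 1) (h2 : φ (e₁₂el k) = ψ (e₁₂el k))
    (h3 : φ (mk k 0 Polynomial.X) = ψ (mk k 0 Polynomial.X)) : φ = ψ := by
  ext s
  obtain ⟨f, g, rfl⟩ := exists_mk k s
  rw [decompR, map_add, map_add, map_add, map_add, LinearMap.map_smul, LinearMap.map_smul,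
    LinearMap.map_smul, LinearMap.map_smul, LinearMap.map_smul, LinearMap.map_smul,
    h1, h2, h3]

/-- The right-`R`-linear map `R → D₂`, `r ↦ φ₂·r`. -/
def Ψ : Rsub k →ₗ[(Rsub k)ᵐᵒᵖ] D₂ k where
  toFun r := op r • φ₂ k
  map_add' r r' := by
    show op (r + r') • φ₂ k = _
    rw [MulOpposite.op_add, add_smul]
  map_smul' m r := by
    show op (m • r) • φ₂ k = m • (op r • φ₂ k)
    have : m • r = r * m.unop := rfl
    rw [this, MulOpposite.op_mul, MulOpposite.op_unop, mul_smul]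

lemma Ψ_apply (r s : Rsub k) : Ψ k r s = φ₂ k (r * s) := rfl

lemma Ψ_val1 (f g : Polynomial k) : Ψ k (mk k f g) 1 = oddPart k g := by
  rw [Ψ_apply, mul_one, φ₂_mk]

lemma Ψ_valU1 (f g : Polynomial k) : Ψ k (mk k f g) (e₁₂el k) = oddPart k f := by
  rw [Ψ_apply, e₁₂el_eq, mk_mul', φ₂_mk]
  simp

lemma Ψ_valU2 (f g : Polynomial k) : Ψ k (mk k f g) (mk k 0 Polynomial.X) = evenPart k f := by
  rw [Ψ_apply, mk_mul', φ₂_mk]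
  rw [map_zero, mul_zero, add_zero, mul_comm, oddPart_X_mul]

/-- A canonical preimage under `Ψ` of a functional `φ ∈ D₂`. -/
def rep (φ : D₂ k) : Rsub k :=
  mk k (Polynomial.expand k 2 (φ (mk k 0 Polynomial.X))
      + Polynomial.X * Polynomial.expand k 2 (φ (e₁₂el k)))
    (Polynomial.X * Polynomial.expand k 2 (φ 1))

lemma rep_spec (φ : D₂ k) : Ψ k (rep k φ) = φ := by
  refine D₂_ext k ?_ ?_ ?_
  · rw [rep, Ψ_val1, oddPart_X_mul_expand]
  · rw [rep, Ψ_valU1]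
    exact (parts_unique k rfl).2
  · rw [rep, Ψ_valU2]
    exact (parts_unique k rfl).1

lemma Ψ_surjective : Function.Surjective (Ψ k) := fun φ => ⟨rep k φ, rep_spec k φ⟩

lemma eq_of_Ψ_eq_zero {r : Rsub k} (h : Ψ k r = 0) :
    ∃ a : Polynomial k, r = mk k 0 (Polynomial.expand k 2 a) := by
  obtain ⟨f, g, rfl⟩ := exists_mk k r
  have h1 : oddPart k g = 0 := by rw [← Ψ_val1 k f g, h]; rfl
  have h2 : oddPart k f = 0 := by rw [← Ψ_valU1 k f g, h]; rfl
  have h3 : evenPart k f = 0 := by rw [← Ψ_valU2 k f g, h]; rfl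
  have hf : f = 0 := eq_zero_of_parts k h3 h2
  exact ⟨evenPart k g, by rw [hf, ← eq_expand_of_oddPart_eq_zero k h1]⟩

lemma Ψ_mk_zero_expand (a : Polynomial k) : Ψ k (mk k 0 (Polynomial.expand k 2 a)) = 0 := by
  refine D₂_ext k ?_ ?_ ?_
  · rw [Ψ_val1, oddPart_expand]; rfl
  · rw [Ψ_valU1, oddPart_zero]; rfl
  · rw [Ψ_valU2, evenPart_zero]; rfl

lemma e₁₂_mul (f g : Polynomial k) :
    e₁₂el k * mk k f g = mk k 0 (Polynomial.expand k 2 f) := by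
  rw [e₁₂el_eq, mk_mul']
  simp

lemma ker_Ψ_eq : LinearMap.ker (Ψ k) = e₁₂R k := by
  ext r
  rw [LinearMap.mem_ker, e₁₂R, Submodule.mem_span_singleton]
  constructor
  · intro h
    obtain ⟨a, rfl⟩ := eq_of_Ψ_eq_zero k h
    exact ⟨op (cEl k a), by
      show e₁₂el k * cEl k a = _
      rw [cEl_eq_mk, e₁₂_mul]⟩
  · rintro ⟨m, rfl⟩
    obtain ⟨f, g, hm⟩ := exists_mk k m.unop
    show Ψ k (e₁₂el k * m.unop) = 0
    rw [hm, e₁₂_mul, Ψ_mk_zero_expand]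

/-- `D₂ ≅ R/e₁₂R` as right `R`-modules. -/
def D2equiv : D₂ k ≃ₗ[(Rsub k)ᵐᵒᵖ] (Rsub k ⧸ e₁₂R k) :=
  ((Submodule.quotEquivOfEq (e₁₂R k) (LinearMap.ker (Ψ k)) (ker_Ψ_eq k).symm).trans
    ((Ψ k).quotKerEquivOfSurjective (Ψ_surjective k))).symm

lemma val_mk_00 (f g : Polynomial k) :
    ((mk k f g : Rsub k) : Matrix (Fin 2) (Fin 2) (Polynomial k)) 0 0 = f := by
  simp [mk]

/-- The idealizer `I(e₁₂R) = {θ ∈ R : θ·e₁₂·R ⊆ e₁₂·R}` as a subring of `R`. -/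
def Idl : Subring (Rsub k) where
  carrier := {θ : Rsub k | ∀ r : Rsub k, ∃ r' : Rsub k, θ * (e₁₂el k * r) = e₁₂el k * r'}
  one_mem' r := ⟨r, one_mul _⟩
  zero_mem' r := ⟨0, by rw [zero_mul, mul_zero]⟩
  add_mem' := by
    intro a b ha hb r
    obtain ⟨r₁, h₁⟩ := ha r
    obtain ⟨r₂, h₂⟩ := hb r
    exact ⟨r₁ + r₂, by rw [add_mul, h₁, h₂, mul_add]⟩
  neg_mem' := by
    intro a ha r
    obtain ⟨r₁, h₁⟩ := ha r
    exact ⟨-r₁, by rw [neg_mul, h₁, mul_neg]⟩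
  mul_mem' := by
    intro a b ha hb r
    obtain ⟨r₁, h₁⟩ := hb r
    obtain ⟨r₂, h₂⟩ := ha r₁
    exact ⟨r₂, by rw [mul_assoc, h₁, h₂]⟩

lemma Idl_coe : ((Idl k : Set (Rsub k)) =
    {θ : Rsub k | ∀ r : Rsub k, ∃ r' : Rsub k, θ * (e₁₂el k * r) = e₁₂el k * r'}) := rfl

lemma mem_Idl {θ : Rsub k} :
    θ ∈ Idl k ↔ ∃ u g : Polynomial k, θ = mk k (Polynomial.expand k 2 u) g := by
  constructor
  · intro h
    obtain ⟨f, g, rfl⟩ := exists_mk k θ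
    obtain ⟨r', h'⟩ := h 1
    obtain ⟨f', g', rfl⟩ := exists_mk k r'
    rw [mul_one, e₁₂el_eq, mk_mul', mk_mul'] at h'
    simp only [mul_zero, mul_one, one_mul, zero_mul, zero_add, map_zero, add_zero] at h'
    obtain ⟨-, h2⟩ := mk_inj k h'
    exact ⟨f', g, by rw [h2]⟩
  · rintro ⟨u, g, rfl⟩ r
    obtain ⟨fr, gr, rfl⟩ := exists_mk k r
    refine ⟨cEl k (u * fr), ?_⟩
    rw [e₁₂_mul, cEl_eq_mk, e₁₂_mul, mk_mul']
    simp only [map_zero, mul_zero, add_zero, zero_add, map_mul]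

/-- The underlying map of `Θ : I(e₁₂R) → R`. -/
def Θfun (θ : Rsub k) : Rsub k :=
  mk k (evenPart k ((θ : Matrix (Fin 2) (Fin 2) (Polynomial k)) 0 0))
    (oddPart k ((θ : Matrix (Fin 2) (Fin 2) (Polynomial k)) 0 1))

lemma Θfun_mk (f g : Polynomial k) :
    Θfun k (mk k f g) = mk k (evenPart k f) (oddPart k g) := by
  rw [Θfun, val_mk_00, val_mk_01]

/-- The ring homomorphism `I(e₁₂R) → R` sending `[[f(x²), g],[0, f(x⁴)]]` to
`[[f, oddPart g],[0, f(x²)]]`; its kernel is `e₁₂R`. -/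
def Θ : Idl k →+* Rsub k where
  toFun θ := Θfun k θ.val
  map_one' := by
    show Θfun k 1 = 1
    rw [← mk_one, Θfun_mk, evenPart_one, oddPart_zero, mk_one]
  map_mul' a b := by
    obtain ⟨u, g, hu⟩ := (mem_Idl k).1 a.2
    obtain ⟨u', g', hu'⟩ := (mem_Idl k).1 b.2
    show Θfun k (a.val * b.val) = Θfun k a.val * Θfun k b.val
    rw [hu, hu', mk_mul', Θfun_mk, Θfun_mk, Θfun_mk, mk_mul', ← map_mul,
      evenPart_expand, evenPart_expand, evenPart_expand, oddPart_add,
      oddPart_expand_mul, mul_comm g, oddPart_expand_mul,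
      Polynomial.expand_eq_comp_X_pow, mul_comm (oddPart k g)]
  map_zero' := by
    show Θfun k 0 = 0
    rw [← mk_zero, Θfun_mk, evenPart_zero, oddPart_zero, mk_zero]
  map_add' a b := by
    show Θfun k (a.val + b.val) = Θfun k a.val + Θfun k b.val
    obtain ⟨f, g, hf⟩ := exists_mk k a.val
    obtain ⟨f', g', hf'⟩ := exists_mk k b.val
    rw [hf, hf', mk_add, Θfun_mk, Θfun_mk, Θfun_mk, evenPart_add, oddPart_add, mk_add]

lemma Θ_mk (u g : Polynomial k) (h : mk k (Polynomial.expand k 2 u) g ∈ Idl k) :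
    Θ k ⟨mk k (Polynomial.expand k 2 u) g, h⟩ = mk k u (oddPart k g) := by
  show Θfun k (mk k (Polynomial.expand k 2 u) g) = _
  rw [Θfun_mk, evenPart_expand]

lemma Θ_surjective : Function.Surjective (Θ k) := by
  intro t
  obtain ⟨f, g, rfl⟩ := exists_mk k t
  have hmem : mk k (Polynomial.expand k 2 f) (Polynomial.X * Polynomial.expand k 2 g) ∈ Idl k :=
    (mem_Idl k).2 ⟨f, _, rfl⟩
  exact ⟨⟨_, hmem⟩, by rw [Θ_mk, oddPart_X_mul_expand]⟩

/-- The image of `e₁₂R` in the idealizer, as a two-sided ideal: the kernel of `Θ`. -/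
def Jideal : TwoSidedIdeal (Idl k) := TwoSidedIdeal.ker (Θ k)

lemma J_coe : ((Jideal k : Set (Idl k)) =
    {x : Idl k | ∃ r : Rsub k, (x : Rsub k) = e₁₂el k * r}) := by
  ext x
  rw [SetLike.mem_coe, Jideal, TwoSidedIdeal.mem_ker]
  constructor
  · intro h
    obtain ⟨u, g, hu⟩ := (mem_Idl k).1 x.2
    rw [show x = ⟨mk k (Polynomial.expand k 2 u) g, hu ▸ x.2⟩ from Subtype.ext hu, Θ_mk] at h
    rw [← mk_zero] at h
    obtain ⟨h1, h2⟩ := mk_inj k h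
    refine ⟨cEl k (evenPart k g), ?_⟩
    rw [cEl_eq_mk, e₁₂_mul, hu, h1, map_zero, ← eq_expand_of_oddPart_eq_zero k h2]
  · rintro ⟨r, hr⟩
    obtain ⟨fr, gr, rfl⟩ := exists_mk k r
    rw [e₁₂_mul] at hr
    show Θfun k x.val = 0
    rw [hr, Θfun_mk, evenPart_zero, oddPart_expand, mk_zero]

lemma J_sound : ∀ a b : Idl k, (Jideal k).ringCon a b → Θ k a = Θ k b := by
  intro a b h
  have := ((Jideal k).rel_iff a b).1 h
  rw [Jideal, TwoSidedIdeal.mem_ker, map_sub, sub_eq_zero] at this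
  exact this

/-- The quotient `I(e₁₂R)/e₁₂R` is isomorphic to `R` itself. -/
def Qequiv : (Jideal k).ringCon.Quotient ≃+* Rsub k := by
  refine RingEquiv.ofBijective
    ({ toFun := Quotient.lift (Θ k) (J_sound k)
       map_one' := map_one (Θ k)
       map_mul' := fun a b => Quotient.inductionOn₂ a b fun x y => map_mul (Θ k) x y
       map_zero' := map_zero (Θ k)
       map_add' := fun a b => Quotient.inductionOn₂ a b fun x y => map_add (Θ k) x y } :
      (Jideal k).ringCon.Quotient →+* Rsub k) ⟨?_, ?_⟩
  · intro a b
    refine Quotient.inductionOn₂ a b fun x y h => ?_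
    have hxy : (Jideal k).ringCon x y := ((Jideal k).rel_iff x y).2 (by
      rw [Jideal, TwoSidedIdeal.mem_ker, map_sub, sub_eq_zero]; exact h)
    exact Quotient.sound hxy
  · intro t
    obtain ⟨x, hx⟩ := Θ_surjective k t
    exact ⟨(x : (Jideal k).ringCon.Quotient), hx⟩

lemma smulD_apply (m : (Rsub k)ᵐᵒᵖ) (φ : D₂ k) (s : Rsub k) : (m • φ) s = φ (m.unop * s) := rfl

lemma Ψ_def (r : Rsub k) : Ψ k r = op r • φ₂ k := rfl

lemma φ₂_one : φ₂ k 1 = 0 := by rw [← mk_one, φ₂_mk, oddPart_zero]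

lemma φ₂_e₁₂ : φ₂ k (e₁₂el k) = 0 := by rw [e₁₂el_eq, φ₂_mk, oddPart_one]

lemma φ₂_u2 : φ₂ k (mk k 0 Polynomial.X) = 1 := by rw [φ₂_mk, oddPart_X]

lemma φ₂_e_smul : op (e₁₂el k) • φ₂ k = 0 := by
  refine LinearMap.ext fun s => ?_
  obtain ⟨f, g, rfl⟩ := exists_mk k s
  show φ₂ k (e₁₂el k * mk k f g) = (0 : D₂ k) (mk k f g)
  rw [LinearMap.zero_apply, e₁₂_mul, φ₂_mk, oddPart_expand]

lemma rep_phi2 : rep k (φ₂ k) = 1 := by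
  rw [rep, φ₂_one, φ₂_e₁₂, φ₂_u2]
  simp only [map_zero, map_one, mul_zero, add_zero]
  rw [mk_one]

lemma chi_aux {θ : Rsub k} (hθ : θ ∈ Idl k) {r r' : Rsub k} (h : Ψ k r = Ψ k r') :
    Ψ k (θ * r) = Ψ k (θ * r') := by
  have h0 : Ψ k (r - r') = 0 := by rw [map_sub, h, sub_self]
  obtain ⟨a, ha⟩ := eq_of_Ψ_eq_zero k h0
  have ha' : r - r' = e₁₂el k * cEl k a := by rw [cEl_eq_mk, e₁₂_mul, ha]
  obtain ⟨r'', hr''⟩ := hθ (cEl k a)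
  have key : Ψ k (θ * r - θ * r') = 0 := by
    rw [← mul_sub, ha', hr'']
    obtain ⟨f'', g'', rfl⟩ := exists_mk k r''
    rw [e₁₂_mul, Ψ_mk_zero_expand]
  rw [map_sub, sub_eq_zero] at key
  exact key

/-- The endomorphism of `D₂` induced by left multiplication by an element `θ` of the
idealizer. -/
def chi (θ : Rsub k) (hθ : θ ∈ Idl k) : Module.End (Rsub k)ᵐᵒᵖ (D₂ k) where
  toFun φ := Ψ k (θ * rep k φ)
  map_add' φ φ' := by
    have h : Ψ k (rep k (φ + φ')) = Ψ k (rep k φ + rep k φ') := by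
      rw [rep_spec, map_add, rep_spec, rep_spec]
    show Ψ k (θ * rep k (φ + φ')) = Ψ k (θ * rep k φ) + Ψ k (θ * rep k φ')
    rw [chi_aux k hθ h, mul_add, map_add]
  map_smul' m φ := by
    have h : Ψ k (rep k (m • φ)) = Ψ k (rep k φ * m.unop) := by
      rw [rep_spec]
      have : rep k φ * m.unop = m • rep k φ := rfl
      rw [this, map_smul, rep_spec]
    show Ψ k (θ * rep k (m • φ)) = m • Ψ k (θ * rep k φ)
    rw [chi_aux k hθ h, ← mul_assoc]
    have : θ * rep k φ * m.unop = m • (θ * rep k φ) := rfl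
    rw [this, map_smul]

/-- The isomorphism `End_R(D₂) ≅ R`, `χ ↦ [[χ(φ₂)(e₁₂x), χ(φ₂)(1)], [0, ...]]`. -/
def Ghom : Module.End (Rsub k)ᵐᵒᵖ (D₂ k) →+* Rsub k where
  toFun χ := mk k ((χ (φ₂ k)) (mk k 0 Polynomial.X)) ((χ (φ₂ k)) 1)
  map_one' := by
    show mk k ((φ₂ k) (mk k 0 Polynomial.X)) ((φ₂ k) 1) = 1
    rw [φ₂_u2, φ₂_one, mk_one]
  map_zero' := by
    show mk k ((0 : D₂ k) (mk k 0 Polynomial.X)) ((0 : D₂ k) 1) = 0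
    rw [LinearMap.zero_apply, LinearMap.zero_apply, mk_zero]
  map_add' χ χ' := by
    show mk k ((χ (φ₂ k) + χ' (φ₂ k)) (mk k 0 Polynomial.X)) ((χ (φ₂ k) + χ' (φ₂ k)) 1) = _
    rw [LinearMap.add_apply, LinearMap.add_apply, mk_add]
  map_mul' χ χ' := by
    set ψ := χ (φ₂ k) with hψdef
    set ψ' := χ' (φ₂ k) with hψ'def
    have hψ'0 : ψ' (e₁₂el k) = 0 := by
      have h1 : op (e₁₂el k) • ψ' = 0 := by
        rw [hψ'def, ← map_smul, φ₂_e_smul, map_zero]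
      have h2 := LinearMap.congr_fun h1 1
      rw [smulD_apply] at h2
      simpa using h2
    set c := ψ' (mk k 0 Polynomial.X) with hc
    set d := ψ' 1 with hd
    set r' := mk k (Polynomial.expand k 2 c) (Polynomial.X * Polynomial.expand k 2 d) with hr'
    have hrep : rep k ψ' = r' := by
      rw [rep, hψ'0, map_zero, mul_zero, add_zero]
    have hψ' : ψ' = Ψ k r' := by rw [← hrep, rep_spec]
    have happ : (χ * χ') (φ₂ k) = op r' • ψ := by
      show χ (χ' (φ₂ k)) = _
      rw [← hψ'def, hψ', Ψ_def, map_smul, hψdef]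
    have h1 : r' * mk k 0 Polynomial.X = c • (mk k 0 Polynomial.X) := by
      rw [smul_mk, cEl_eq_mk, hr', mk_mul', mk_mul']
      simp only [mul_zero, zero_mul, zero_add, add_zero, map_zero]
      rw [mul_comm]
    have h2 : ψ (r' * mk k 0 Polynomial.X) = c * ψ (mk k 0 Polynomial.X) := by
      rw [h1, LinearMap.map_smul, smul_eq_mul]
    have h3 : ψ r' = Polynomial.expand k 2 c * ψ 1 + d * ψ (mk k 0 Polynomial.X) := by
      rw [hr', decompR, evenPart_X_mul, oddPart_expand, mul_zero, zero_smul, add_zero,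
        oddPart_X_mul, evenPart_expand, map_add, LinearMap.map_smul, LinearMap.map_smul,
        smul_eq_mul, smul_eq_mul]
    show mk k (((χ * χ') (φ₂ k)) (mk k 0 Polynomial.X)) (((χ * χ') (φ₂ k)) 1)
      = mk k (ψ (mk k 0 Polynomial.X)) (ψ 1) * mk k c d
    rw [happ, smulD_apply, smulD_apply, unop_op, mul_one, h2, h3, mk_mul']
    congr 1
    · ring
    · ring
  
lemma Ghom_bijective : Function.Bijective (Ghom k) := by
  constructor
  · intro χ χ' h
    have hmk := mk_inj k h
    have hψ0 : ∀ χ'' : Module.End (Rsub k)ᵐᵒᵖ (D₂ k), (χ'' (φ₂ k)) (e₁₂el k) = 0 := by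
      intro χ''
      have h1 : op (e₁₂el k) • χ'' (φ₂ k) = 0 := by
        rw [← map_smul, φ₂_e_smul, map_zero]
      have h2 := LinearMap.congr_fun h1 1
      rw [smulD_apply] at h2
      simpa using h2
    have hψ : χ (φ₂ k) = χ' (φ₂ k) := by
      refine D₂_ext k hmk.2 ?_ hmk.1
      rw [hψ0 χ, hψ0 χ']
    refine LinearMap.ext fun φ => ?_
    rw [show φ = Ψ k (rep k φ) from (rep_spec k φ).symm, Ψ_def, map_smul, map_smul, hψ]
  · intro t
    obtain ⟨f₀, g₀, rfl⟩ := exists_mk k t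
    have hθ : mk k (Polynomial.expand k 2 f₀) (Polynomial.X * Polynomial.expand k 2 g₀)
        ∈ Idl k := (mem_Idl k).2 ⟨f₀, _, rfl⟩
    refine ⟨chi k _ hθ, ?_⟩
    show mk k ((Ψ k (_ * rep k (φ₂ k))) (mk k 0 Polynomial.X))
      ((Ψ k (_ * rep k (φ₂ k))) 1) = _
    rw [rep_phi2, mul_one, Ψ_valU2, Ψ_val1, evenPart_expand, oddPart_X_mul_expand]

/-- `End_R(D₂) ≅ R` as rings. -/
def Gequiv : Module.End (Rsub k)ᵐᵒᵖ (D₂ k) ≃+* Rsub k :=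
  RingEquiv.ofBijective (Ghom k) (Ghom_bijective k)

/-- Example 5.2: for `R = {[[f(x), g(x)], [0, f(x²)]]}` with `C = {diag(f(x), f(x²))} ≅ k[x]`
and `D₂ = Hom_C(R_C, C)` its `C`-dual, a right `R`-module via `(φ·r)(s) = φ(rs)`:
the subring `R ⊆ M₂(k[x])` is the closure of the displayed set (it is already closed);
`D₂ ≅ R/e₁₂R` as right `R`-modules; the endomorphism ring `End_R(D₂)` is isomorphic to
`I(e₁₂R)/e₁₂R`, where `I(e₁₂R) = {θ ∈ R : θ·e₁₂·R ⊆ e₁₂·R}` is the idealizer; and this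
endomorphism ring is isomorphic to `R` itself. -/
theorem D₂_dualizing_data :
    ((Rsub k : Set (Matrix (Fin 2) (Fin 2) (Polynomial k))) = Rset k) ∧
    Nonempty (D₂ k ≃ₗ[(Rsub k)ᵐᵒᵖ] ((Rsub k) ⧸ e₁₂R k)) ∧
    (∃ Idl : Subring (Rsub k),
      (Idl : Set (Rsub k)) =
        {θ : Rsub k | ∀ r : Rsub k, ∃ r' : Rsub k, θ * (e₁₂el k * r) = e₁₂el k * r'} ∧
      ∃ J : TwoSidedIdeal Idl,
        (J : Set Idl) = {x : Idl | ∃ r : Rsub k, (x : Rsub k) = e₁₂el k * r} ∧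
        Nonempty (Module.End (Rsub k)ᵐᵒᵖ (D₂ k) ≃+* J.ringCon.Quotient)) ∧
    Nonempty (Module.End (Rsub k)ᵐᵒᵖ (D₂ k) ≃+* Rsub k) := by
  exact ⟨Rsub_coe_eq k, ⟨D2equiv k⟩,
    ⟨Idl k, Idl_coe k, Jideal k, J_coe k, ⟨(Gequiv k).trans (Qequiv k).symm⟩⟩,
    ⟨Gequiv k⟩⟩

end
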